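/- Restriction of discrete holomorphic functions to primal vertices is harmonic: with the star around vertex v as above (neighbors u_j = v + e^{iγ_j} + e^{iγ_{j+1}}, dual vertices x_j = v + e^{iγ_j}), if f : {v, u_1, ..., u_k, x_1, ..., x_k} → ℂ satisfies the discrete Cauchy-Riemann equation (f(u_j) - f(v))/(u_j - v) = (f(x_{j+1}) - f(x_j))/(x_{j+1} - x_j) on every rhombus j (indices mod k), then ∑_{j=1}^k tan(θ_j)(f(u_j) - f(v)) = 0, i.e., f restricted to primal vertices is discrete harmonic at v. -/
import Mathlib

open Finset

lemma key_rhombus (γ₁ γ₂ : ℝ) (h1 : γ₁ < γ₂) (h2 : γ₂ - γ₁ < Real.pi) (A B : ℂ)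
    (hCR : A / (Complex.exp (Complex.I * γ₁) + Complex.exp (Complex.I * γ₂)) =
      B / (Complex.exp (Complex.I * γ₂) - Complex.exp (Complex.I * γ₁))) :
    (Real.tan ((γ₂ - γ₁) / 2) : ℂ) * A = -Complex.I * B := by
  set θ : ℝ := (γ₂ - γ₁) / 2 with hθ
  set m : ℝ := (γ₁ + γ₂) / 2 with hm
  have hθ0 : 0 < θ := by rw [hθ]; linarith
  have hθπ : θ < Real.pi / 2 := by rw [hθ]; linarith
  have hsp : 0 < Real.sin θ := Real.sin_pos_of_pos_of_lt_pi hθ0 (by linarith [Real.pi_pos])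
  have hcp : 0 < Real.cos θ := Real.cos_pos_of_mem_Ioo ⟨by linarith, hθπ⟩
  have hs : (Real.sin θ : ℂ) ≠ 0 := by exact_mod_cast ne_of_gt hsp
  have hc : (Real.cos θ : ℂ) ≠ 0 := by exact_mod_cast ne_of_gt hcp
  have hγ1 : (γ₁ : ℂ) = (m : ℂ) - θ := by rw [hθ, hm]; push_cast; ring
  have hγ2 : (γ₂ : ℂ) = (m : ℂ) + θ := by rw [hθ, hm]; push_cast; ring
  have e1 : Complex.exp (Complex.I * γ₁) =
      Complex.exp (Complex.I * m) * ((Real.cos θ : ℂ) - (Real.sin θ : ℂ) * Complex.I) := by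
    rw [hγ1, show Complex.I * ((m : ℂ) - θ) = Complex.I * m + (-(θ : ℂ)) * Complex.I by ring,
      Complex.exp_add, Complex.exp_mul_I, Complex.cos_neg, Complex.sin_neg,
      ← Complex.ofReal_cos, ← Complex.ofReal_sin]
    ring
  have e2 : Complex.exp (Complex.I * γ₂) =
      Complex.exp (Complex.I * m) * ((Real.cos θ : ℂ) + (Real.sin θ : ℂ) * Complex.I) := by
    rw [hγ2, show Complex.I * ((m : ℂ) + θ) = Complex.I * m + (θ : ℂ) * Complex.I by ring,
      Complex.exp_add, Complex.exp_mul_I, ← Complex.ofReal_cos, ← Complex.ofReal_sin]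
  have hE : Complex.exp (Complex.I * m) ≠ 0 := Complex.exp_ne_zero _
  rw [e1, e2] at hCR
  have hd1 : Complex.exp (Complex.I * m) * ((Real.cos θ : ℂ) - (Real.sin θ : ℂ) * Complex.I) +
      Complex.exp (Complex.I * m) * ((Real.cos θ : ℂ) + (Real.sin θ : ℂ) * Complex.I) =
      Complex.exp (Complex.I * m) * (2 * (Real.cos θ : ℂ)) := by ring
  have hd2 : Complex.exp (Complex.I * m) * ((Real.cos θ : ℂ) + (Real.sin θ : ℂ) * Complex.I) -
      Complex.exp (Complex.I * m) * ((Real.cos θ : ℂ) - (Real.sin θ : ℂ) * Complex.I) =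
      Complex.exp (Complex.I * m) * (2 * (Real.sin θ : ℂ) * Complex.I) := by ring
  rw [hd1, hd2] at hCR
  have key : A * (2 * (Real.sin θ : ℂ) * Complex.I) = B * (2 * (Real.cos θ : ℂ)) := by
    have h := (div_eq_div_iff
        (mul_ne_zero hE (mul_ne_zero two_ne_zero hc))
        (mul_ne_zero hE (mul_ne_zero (mul_ne_zero two_ne_zero hs) Complex.I_ne_zero))).mp hCR
    apply mul_left_cancel₀ hE
    linear_combination h
  rw [Real.tan_eq_sin_div_cos, Complex.ofReal_div, div_mul_eq_mul_div, div_eq_iff hc]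
  linear_combination (-Complex.I / 2) * key + (Real.sin θ : ℂ) * A * Complex.I_sq

/-- The restriction of a discrete holomorphic function to the primal vertices is discrete
harmonic: with rhombus side directions `e^{iγ_0}, …, e^{iγ_{k-1}}` around a vertex `v` in
strictly increasing cyclic order (`γ_k = γ_0 + 2π`, gaps in `(0, π)`), primal neighbors
`u_j = v + e^{iγ_j} + e^{iγ_{j+1}}` and dual vertices `x_j = v + e^{iγ_j}`, if `f`
satisfies the discrete Cauchy-Riemann equation
`(f(u_j) - f(v))/(u_j - v) = (f(x_{j+1}) - f(x_j))/(x_{j+1} - x_j)` on every rhombus,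
then `∑_j tan(θ_j)·(f(u_j) - f(v)) = 0` with `θ_j = (γ_{j+1}-γ_j)/2`. -/
theorem discrete_holomorphic_restriction_harmonic
    (k : ℕ) (hk : 0 < k) (γ : ℕ → ℝ) (v : ℂ) (u x : ℕ → ℂ) (f : ℂ → ℂ)
    (hmono : ∀ j < k, γ j < γ (j + 1))
    (hgap : ∀ j < k, γ (j + 1) - γ j < Real.pi)
    (hper : γ k = γ 0 + 2 * Real.pi)
    (hu : ∀ j < k, u j = v + Complex.exp (Complex.I * γ j) +
      Complex.exp (Complex.I * γ (j + 1)))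
    (hx : ∀ j ≤ k, x j = v + Complex.exp (Complex.I * γ j))
    (hCR : ∀ j < k, (f (u j) - f v) / (u j - v) =
      (f (x (j + 1)) - f (x j)) / (x (j + 1) - x j)) :
    ∑ j ∈ Finset.range k, (Real.tan ((γ (j + 1) - γ j) / 2) : ℂ) * (f (u j) - f v) = 0 := by
  have hterm : ∀ j < k, (Real.tan ((γ (j + 1) - γ j) / 2) : ℂ) * (f (u j) - f v) =
      -Complex.I * (f (x (j + 1)) - f (x j)) := by
    intro j hj
    have h := hCR j hj
    have hd1 : u j - v = Complex.exp (Complex.I * γ j) + Complex.exp (Complex.I * γ (j + 1)) := by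
      rw [hu j hj]; ring
    have hd2 : x (j + 1) - x j =
        Complex.exp (Complex.I * γ (j + 1)) - Complex.exp (Complex.I * γ j) := by
      rw [hx (j + 1) hj, hx j hj.le]; ring
    rw [hd1, hd2] at h
    exact key_rhombus _ _ (hmono j hj) (hgap j hj) _ _ h
  rw [Finset.sum_congr rfl (fun j hj => hterm j (Finset.mem_range.mp hj)),
    ← Finset.mul_sum, Finset.sum_range_sub (fun j => f (x j))]
  have hxk : x k = x 0 := by
    rw [hx k le_rfl, hx 0 (Nat.zero_le _), hper]
    push_cast
    rw [mul_add, Complex.exp_add,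
      show Complex.I * (2 * Real.pi : ℂ) = 2 * Real.pi * Complex.I by ring,
      Complex.exp_two_pi_mul_I, mul_one]
  rw [hxk]
  simp
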